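/- Let A be a unital *-subalgebra of B(H) with CPTP factors R, J of the orthogonal conditional expectation onto A. For any D ∈ B(H), define G_D(ρ) = Dρ + ρD*. Then R ∘ G_D ∘ J = G_{Ď} with Ď = J*(D), i.e., R(D·J(ρ̌) + J(ρ̌)·D*) = Ď ρ̌ + ρ̌ Ď* for all ρ̌ in the reduced algebra. -/
import Mathlib


/-! STATEMENT 2: reduction of G_D(ρ) = Dρ + ρD*. With the CPTP factors R, J of the
orthogonal conditional expectation (Wedderburn data V, W), R ∘ G_D ∘ J = G_{Ď} with Ď = J*(D). -/

open Matrix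
open scoped Kronecker BigOperators

noncomputable section

abbrev Mat (n : ℕ) : Type := Matrix (Fin n) (Fin n) ℂ

/-- Partial trace over the second tensor factor. -/
def ptrG {a b : ℕ} (M : Matrix (Fin a × Fin b) (Fin a × Fin b) ℂ) :
    Matrix (Fin a) (Fin a) ℂ :=
  Matrix.of fun i j => ∑ g : Fin b, M (i, g) (j, g)

variable {K n m : ℕ} {dF dG : Fin K → ℕ}

/-- The reduction map `R : B(H) → Ǎ`, `R(X) = ⊕ₖ tr_{G,k}(Vₖ* X Vₖ)`. -/
def Rmap (V : ∀ k : Fin K, Matrix (Fin n) (Fin (dF k) × Fin (dG k)) ℂ)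
    (W : ∀ k : Fin K, Matrix (Fin m) (Fin (dF k)) ℂ) (X : Mat n) : Mat m :=
  ∑ k : Fin K, W k * ptrG ((V k)ᴴ * X * V k) * (W k)ᴴ

/-- The injection map `J : Ǎ → B(H)`, `J(ρ̌) = ⊕ₖ ρ̌ₖ ⊗ 1_{G,k}/dim H_{G,k}`. -/
def Jmap (V : ∀ k : Fin K, Matrix (Fin n) (Fin (dF k) × Fin (dG k)) ℂ)
    (W : ∀ k : Fin K, Matrix (Fin m) (Fin (dF k)) ℂ) (ρ : Mat m) : Mat n :=
  ∑ k : Fin K, V k *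
    (((W k)ᴴ * ρ * W k) ⊗ₖ (((dG k : ℂ))⁻¹ • (1 : Matrix (Fin (dG k)) (Fin (dG k)) ℂ))) *
    (V k)ᴴ

/-- The Hilbert–Schmidt adjoint of `J`, `J*(X) = ⊕ₖ tr_{G,k}(Vₖ* X Vₖ)/dim H_{G,k}`. -/
def Jstar (V : ∀ k : Fin K, Matrix (Fin n) (Fin (dF k) × Fin (dG k)) ℂ)
    (W : ∀ k : Fin K, Matrix (Fin m) (Fin (dF k)) ℂ) (X : Mat n) : Mat m :=
  ∑ k : Fin K, ((dG k : ℂ))⁻¹ • (W k * ptrG ((V k)ᴴ * X * V k) * (W k)ᴴ)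

/-- Membership in the reduced algebra `Ǎ = ⊕ₖ B(H_{F,k})`: block-diagonal matrices. -/
def IsBlockDiag (W : ∀ k : Fin K, Matrix (Fin m) (Fin (dF k)) ℂ) (ρ : Mat m) : Prop :=
  ρ = ∑ k : Fin K, (W k * (W k)ᴴ) * ρ * (W k * (W k)ᴴ)


lemma ptrG_mul_kron {a b : ℕ} (M : Matrix (Fin a × Fin b) (Fin a × Fin b) ℂ)
    (A : Matrix (Fin a) (Fin a) ℂ) :
    ptrG (M * (A ⊗ₖ (1 : Matrix (Fin b) (Fin b) ℂ))) = ptrG M * A := by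
  ext i j
  simp only [ptrG, Matrix.of_apply, Matrix.mul_apply, Matrix.kroneckerMap_apply,
    Matrix.one_apply, Fintype.sum_prod_type, mul_ite, mul_one, mul_zero,
    Finset.sum_ite_eq', Finset.mem_univ, if_true]
  rw [Finset.sum_comm]
  simp [Finset.sum_mul]

lemma ptrG_kron_mul {a b : ℕ} (M : Matrix (Fin a × Fin b) (Fin a × Fin b) ℂ)
    (A : Matrix (Fin a) (Fin a) ℂ) :
    ptrG ((A ⊗ₖ (1 : Matrix (Fin b) (Fin b) ℂ)) * M) = A * ptrG M := by
  ext i j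
  simp only [ptrG, Matrix.of_apply, Matrix.mul_apply, Matrix.kroneckerMap_apply,
    Matrix.one_apply, Fintype.sum_prod_type, ite_mul, one_mul, zero_mul,
    Finset.sum_ite_eq', Finset.mem_univ, if_true]
  rw [Finset.sum_comm]
  simp [Finset.mul_sum]

lemma ptrG_smul {a b : ℕ} (c : ℂ) (M : Matrix (Fin a × Fin b) (Fin a × Fin b) ℂ) :
    ptrG (c • M) = c • ptrG M := by
  ext i j
  simp [ptrG, Finset.mul_sum]

lemma ptrG_add {a b : ℕ} (M N : Matrix (Fin a × Fin b) (Fin a × Fin b) ℂ) :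
    ptrG (M + N) = ptrG M + ptrG N := by
  ext i j
  simp [ptrG, Finset.sum_add_distrib]

lemma ptrG_conjTranspose {a b : ℕ} (M : Matrix (Fin a × Fin b) (Fin a × Fin b) ℂ) :
    (ptrG M)ᴴ = ptrG Mᴴ := by
  ext i j
  simp [ptrG, Matrix.conjTranspose_apply, map_sum]

theorem reduced_GD
    (V : ∀ k : Fin K, Matrix (Fin n) (Fin (dF k) × Fin (dG k)) ℂ)
    (W : ∀ k : Fin K, Matrix (Fin m) (Fin (dF k)) ℂ)
    (hVortho : ∀ k, (V k)ᴴ * V k = 1)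
    (hVdisj : ∀ j k, j ≠ k → (V j)ᴴ * V k = 0)
    (hVcomplete : ∑ k : Fin K, V k * (V k)ᴴ = 1)
    (hWortho : ∀ k, (W k)ᴴ * W k = 1)
    (hWdisj : ∀ j k, j ≠ k → (W j)ᴴ * W k = 0)
    (hWcomplete : ∑ k : Fin K, W k * (W k)ᴴ = 1)
    (hdG : ∀ k, 0 < dG k)
    (D : Mat n) :
    ∀ ρ : Mat m, IsBlockDiag W ρ →
      Rmap V W (D * Jmap V W ρ + Jmap V W ρ * Dᴴ) =
        Jstar V W D * ρ + ρ * (Jstar V W D)ᴴ := by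
  intro ρ hρ
  have hWρ : ∀ k, (W k)ᴴ * ρ = ((W k)ᴴ * ρ * W k) * (W k)ᴴ := by
    intro k
    conv_lhs => rw [hρ]
    rw [Matrix.mul_sum, Finset.sum_eq_single k]
    · calc (W k)ᴴ * (W k * (W k)ᴴ * ρ * (W k * (W k)ᴴ))
          = ((W k)ᴴ * W k) * ((W k)ᴴ * (ρ * (W k * (W k)ᴴ))) := by simp [Matrix.mul_assoc]
        _ = _ := by rw [hWortho k]; simp [Matrix.mul_assoc]
    · intro j _ hj
      calc (W k)ᴴ * (W j * (W j)ᴴ * ρ * (W j * (W j)ᴴ))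
          = ((W k)ᴴ * W j) * ((W j)ᴴ * (ρ * (W j * (W j)ᴴ))) := by simp [Matrix.mul_assoc]
        _ = 0 := by rw [hWdisj k j (Ne.symm hj)]; simp
    · simp
  have hρW : ∀ k, ρ * W k = W k * ((W k)ᴴ * ρ * W k) := by
    intro k
    conv_lhs => rw [hρ]
    rw [Matrix.sum_mul, Finset.sum_eq_single k]
    · calc W k * (W k)ᴴ * ρ * (W k * (W k)ᴴ) * W k
          = W k * ((W k)ᴴ * ρ * (W k * ((W k)ᴴ * W k))) := by simp [Matrix.mul_assoc]
        _ = _ := by rw [hWortho k]; simp [Matrix.mul_assoc]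
    · intro j _ hj
      calc W j * (W j)ᴴ * ρ * (W j * (W j)ᴴ) * W k
          = W j * ((W j)ᴴ * ρ * (W j * ((W j)ᴴ * W k))) := by simp [Matrix.mul_assoc]
        _ = 0 := by rw [hWdisj j k hj]; simp
    · simp
  have hJV : ∀ k, Jmap V W ρ * V k =
      V k * (((W k)ᴴ * ρ * W k) ⊗ₖ (((dG k : ℂ))⁻¹ • (1 : Matrix (Fin (dG k)) (Fin (dG k)) ℂ))) := by
    intro k
    unfold Jmap
    rw [Matrix.sum_mul, Finset.sum_eq_single k]
    · rw [Matrix.mul_assoc, Matrix.mul_assoc, hVortho k, Matrix.mul_one]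
    · intro j _ hj
      rw [Matrix.mul_assoc, Matrix.mul_assoc, hVdisj j k hj]; simp
    · simp
  have hVJ : ∀ k, (V k)ᴴ * Jmap V W ρ =
      (((W k)ᴴ * ρ * W k) ⊗ₖ (((dG k : ℂ))⁻¹ • (1 : Matrix (Fin (dG k)) (Fin (dG k)) ℂ))) * (V k)ᴴ := by
    intro k
    unfold Jmap
    rw [Matrix.mul_sum, Finset.sum_eq_single k]
    · rw [← Matrix.mul_assoc, ← Matrix.mul_assoc, hVortho k, Matrix.one_mul]
    · intro j _ hj
      rw [← Matrix.mul_assoc, ← Matrix.mul_assoc, hVdisj k j (Ne.symm hj)]; simp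
    · simp
  set c : Fin K → ℂ := fun k => ((dG k : ℂ))⁻¹ with hc
  set rh : ∀ k, Matrix (Fin (dF k)) (Fin (dF k)) ℂ := fun k => (W k)ᴴ * ρ * W k with hrh
  set Dd : ∀ k, Matrix (Fin (dF k)) (Fin (dF k)) ℂ := fun k => ptrG ((V k)ᴴ * D * V k) with hDd
  set Dd' : ∀ k, Matrix (Fin (dF k)) (Fin (dF k)) ℂ := fun k => ptrG ((V k)ᴴ * Dᴴ * V k) with hDd'
  have key : ∀ k, ptrG ((V k)ᴴ * (D * Jmap V W ρ + Jmap V W ρ * Dᴴ) * V k) =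
      c k • (Dd k * rh k) + c k • (rh k * Dd' k) := by
    intro k
    have h1 : (V k)ᴴ * (D * Jmap V W ρ + Jmap V W ρ * Dᴴ) * V k =
        ((V k)ᴴ * D * V k) * (rh k ⊗ₖ (c k • 1)) +
        (rh k ⊗ₖ (c k • 1)) * ((V k)ᴴ * Dᴴ * V k) := by
      rw [Matrix.mul_add, Matrix.add_mul]
      congr 1
      · calc (V k)ᴴ * (D * Jmap V W ρ) * V k
            = (V k)ᴴ * D * (Jmap V W ρ * V k) := by simp [Matrix.mul_assoc]
          _ = _ := by rw [hJV k]; simp [hrh, hc, Matrix.mul_assoc]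
      · calc (V k)ᴴ * (Jmap V W ρ * Dᴴ) * V k
            = ((V k)ᴴ * Jmap V W ρ) * (Dᴴ * V k) := by simp [Matrix.mul_assoc]
          _ = _ := by rw [hVJ k]; simp [hrh, hc, Matrix.mul_assoc]
    rw [h1, ptrG_add]
    have hk : (rh k ⊗ₖ (c k • (1 : Matrix (Fin (dG k)) (Fin (dG k)) ℂ))) =
        c k • (rh k ⊗ₖ (1 : Matrix (Fin (dG k)) (Fin (dG k)) ℂ)) := by
      rw [Matrix.kronecker_smul]
    rw [hk, Matrix.mul_smul, Matrix.smul_mul, ptrG_smul, ptrG_smul,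
      ptrG_mul_kron, ptrG_kron_mul]
  have hRHS1 : Jstar V W D * ρ = ∑ k, c k • (W k * (Dd k * rh k) * (W k)ᴴ) := by
    unfold Jstar
    rw [Matrix.sum_mul]
    refine Finset.sum_congr rfl fun k _ => ?_
    rw [Matrix.smul_mul]
    congr 1
    calc W k * Dd k * (W k)ᴴ * ρ = W k * Dd k * ((W k)ᴴ * ρ) := by rw [Matrix.mul_assoc]
      _ = W k * Dd k * (rh k * (W k)ᴴ) := by rw [hWρ k]
      _ = W k * (Dd k * rh k) * (W k)ᴴ := by simp [Matrix.mul_assoc]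
  have hJstarH : (Jstar V W D)ᴴ = ∑ k, c k • (W k * Dd' k * (W k)ᴴ) := by
    unfold Jstar
    rw [Matrix.conjTranspose_sum]
    refine Finset.sum_congr rfl fun k _ => ?_
    rw [Matrix.conjTranspose_smul]
    have hstar : star (((dG k : ℂ))⁻¹) = c k := by simp [hc]
    rw [hstar]
    congr 1
    rw [Matrix.conjTranspose_mul, Matrix.conjTranspose_mul, Matrix.conjTranspose_conjTranspose,
      ptrG_conjTranspose]
    have h2 : ((V k)ᴴ * D * V k)ᴴ = (V k)ᴴ * Dᴴ * V k := by
      rw [Matrix.conjTranspose_mul, Matrix.conjTranspose_mul]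
      simp [Matrix.mul_assoc]
    rw [h2]
    simp [hDd', Matrix.mul_assoc]
  have hRHS2 : ρ * (Jstar V W D)ᴴ = ∑ k, c k • (W k * (rh k * Dd' k) * (W k)ᴴ) := by
    rw [hJstarH, Matrix.mul_sum]
    refine Finset.sum_congr rfl fun k _ => ?_
    rw [Matrix.mul_smul]
    congr 1
    calc ρ * (W k * Dd' k * (W k)ᴴ) = (ρ * W k) * (Dd' k * (W k)ᴴ) := by simp [Matrix.mul_assoc]
      _ = (W k * rh k) * (Dd' k * (W k)ᴴ) := by rw [hρW k]
      _ = W k * (rh k * Dd' k) * (W k)ᴴ := by simp [Matrix.mul_assoc]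
  unfold Rmap
  rw [hRHS1, hRHS2, ← Finset.sum_add_distrib]
  refine Finset.sum_congr rfl fun k _ => ?_
  rw [key k]
  rw [Matrix.mul_add, Matrix.add_mul, Matrix.mul_smul, Matrix.mul_smul,
    Matrix.smul_mul, Matrix.smul_mul]

end
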